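/- arXiv:1302.4196 — 2 statements merged into one kernel-verified Lean document; each statement's English description precedes it below -/
import Mathlib

section
/- Let B be an m×m column-stochastic irreducible nonnegative matrix. Then the set of eigenvalues of B of modulus 1 is a finite cyclic group of roots of unity (under multiplication), of order at most m. -/
open Matrix Polynomial

lemma spec_iff_det {n : ℕ} (A : Matrix (Fin n) (Fin n) ℂ) (z : ℂ) :
    z ∈ spectrum ℂ A ↔ (z • (1 : Matrix (Fin n) (Fin n) ℂ) - A).det = 0 := by
  rw [spectrum.mem_iff, Algebra.algebraMap_eq_smul_one]
  simp [Matrix.isUnit_iff_isUnit_det, isUnit_iff_ne_zero]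

lemma exists_eigvec {n : ℕ} (A : Matrix (Fin n) (Fin n) ℂ) (z : ℂ) (hz : z ∈ spectrum ℂ A) :
    ∃ x : Fin n → ℂ, x ≠ 0 ∧ A.mulVec x = z • x := by
  rw [spec_iff_det] at hz
  obtain ⟨v, hv, hv0⟩ := (Matrix.exists_mulVec_eq_zero_iff).2 hz
  refine ⟨v, hv, ?_⟩
  have := hv0
  rw [Matrix.sub_mulVec, Matrix.smul_mulVec, Matrix.one_mulVec, sub_eq_zero] at this
  exact this.symm

lemma spec_vec {n : ℕ} (A : Matrix (Fin n) (Fin n) ℂ) (z : ℂ) (x : Fin n → ℂ) (hx : x ≠ 0)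
    (h : A.mulVec x = z • x) : z ∈ spectrum ℂ A := by
  rw [spec_iff_det]
  rw [← Matrix.exists_mulVec_eq_zero_iff]
  exact ⟨x, hx, by rw [Matrix.sub_mulVec, Matrix.smul_mulVec, Matrix.one_mulVec, h, sub_self]⟩

lemma eval_charpoly {n : ℕ} (A : Matrix (Fin n) (Fin n) ℂ) (z : ℂ) :
    A.charpoly.eval z = (z • (1 : Matrix (Fin n) (Fin n) ℂ) - A).det := by
  rw [Matrix.charpoly, eval_det, matPolyEquiv_charmatrix]
  rw [eval_sub, eval_X, eval_C, Matrix.smul_one_eq_diagonal, Matrix.scalar_apply]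

lemma spec_finite {n : ℕ} (A : Matrix (Fin n) (Fin n) ℂ) :
    spectrum ℂ A ⊆ ↑A.charpoly.roots.toFinset := by
  intro z hz
  rw [spec_iff_det] at hz
  simp only [Finset.coe_sort_coe, Multiset.mem_toFinset, Finset.mem_coe]
  rw [Polynomial.mem_roots (A.charpoly_monic.ne_zero)]
  rw [Polynomial.IsRoot, eval_charpoly, hz]

lemma roots_card {n : ℕ} (A : Matrix (Fin n) (Fin n) ℂ) :
    A.charpoly.roots.toFinset.card ≤ n := by
  calc A.charpoly.roots.toFinset.card ≤ Multiset.card A.charpoly.roots :=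
        Multiset.toFinset_card_le _
    _ ≤ A.charpoly.natDegree := Polynomial.card_roots' _
    _ = n := by rw [Matrix.charpoly_natDegree_eq_dim, Fintype.card_fin]

lemma spec_transpose {n : ℕ} (A : Matrix (Fin n) (Fin n) ℂ) (z : ℂ) :
    z ∈ spectrum ℂ Aᵀ ↔ z ∈ spectrum ℂ A := by
  rw [spec_iff_det, spec_iff_det, ← Matrix.det_transpose (z • 1 - A)]
  congr! 2
  rw [Matrix.transpose_sub, Matrix.transpose_smul, Matrix.transpose_one]

lemma one_mem_spec {m : ℕ} (B : Matrix (Fin m) (Fin m) ℝ) (hm : 1 ≤ m)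
    (hcol : ∀ j, ∑ i, B i j = 1) :
    (1 : ℂ) ∈ spectrum ℂ (B.map Complex.ofReal) := by
  rw [← spec_transpose]
  apply spec_vec _ _ (fun _ => 1)
  · intro h
    have := congr_fun h ⟨0, hm⟩
    simp at this
  · funext j
    simp only [Matrix.mulVec, Matrix.transpose_apply, Matrix.map_apply, dotProduct,
      mul_one, Pi.smul_apply, smul_eq_mul]
    rw [← Complex.ofReal_sum]
    rw [hcol j]
    simp

lemma shift_lemma (m : ℕ) (B : Matrix (Fin m) (Fin m) ℝ)
    (hpos : ∀ i j, 0 ≤ B i j) (hcol : ∀ j, ∑ i, B i j = 1)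
    (hirr : ∀ i j, ∃ k : ℕ, 1 ≤ k ∧ 0 < (B ^ k) i j)
    (lam : ℂ) (hlam : lam ∈ spectrum ℂ (B.map Complex.ofReal)) (habs : ‖lam‖ = 1)
    (z : ℂ) (hz : z ∈ spectrum ℂ (B.map Complex.ofReal)) :
    lam * z ∈ spectrum ℂ (B.map Complex.ofReal) := by
  set A := B.map Complex.ofReal with hA
  obtain ⟨x, hx0, hx⟩ := exists_eigvec A lam hlam
  set r : Fin m → ℝ := fun i => ‖x i‖ with hr
  have hAentry : ∀ w : Fin m → ℂ, ∀ i, A.mulVec w i = ∑ j, (B i j : ℂ) * w j := by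
    intro w i
    simp [Matrix.mulVec, dotProduct, hA, Matrix.map_apply]
  -- Step A : r i ≤ (B r) i
  have hle : ∀ i ∈ Finset.univ, r i ≤ ∑ j, B i j * r j := by
    intro i _
    have h1 : r i = ‖∑ j, (B i j : ℂ) * x j‖ := by
      rw [← hAentry x i, hx]
      simp only [Pi.smul_apply, smul_eq_mul, norm_mul, habs, one_mul, hr]
    rw [h1]
    refine le_trans (norm_sum_le _ _) ?_
    apply le_of_eq
    refine Finset.sum_congr rfl fun j _ => ?_
    rw [norm_mul, Complex.norm_real, Real.norm_eq_abs, abs_of_nonneg (hpos i j)]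
  -- Step B : equality
  have hsum : ∑ i, r i = ∑ i, ∑ j, B i j * r j := by
    rw [Finset.sum_comm]
    refine (Finset.sum_congr rfl fun j _ => ?_).symm
    rw [← Finset.sum_mul, hcol j, one_mul]
  have heq : ∀ i, ∑ j, B i j * r j = r i := by
    intro i
    exact ((Finset.sum_eq_sum_iff_of_le hle).1 hsum i (Finset.mem_univ i)).symm
  have hBr : B.mulVec r = r := by
    funext i; simpa [Matrix.mulVec, dotProduct] using heq i
  -- Step C : positivity of r
  have hrnn : ∀ i, 0 ≤ r i := fun i => norm_nonneg _
  have hpowpos : ∀ k : ℕ, ∀ i j, 0 ≤ (B ^ k) i j := by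
    intro k
    induction k with
    | zero => intro i j; by_cases h : i = j <;> simp [pow_zero, Matrix.one_apply, h]
    | succ n ih =>
      intro i j
      rw [pow_succ, Matrix.mul_apply]
      exact Finset.sum_nonneg fun l _ => mul_nonneg (ih i l) (hpos l j)
  have hBkr : ∀ k : ℕ, (B ^ k).mulVec r = r := by
    intro k
    induction k with
    | zero => simp [pow_zero, Matrix.one_mulVec]
    | succ n ih => rw [pow_succ', ← Matrix.mulVec_mulVec, ih, hBr]
  have hrpos : ∀ i, 0 < r i := by
    obtain ⟨j0, hj0⟩ : ∃ j0, x j0 ≠ 0 := by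
      by_contra h
      push_neg at h
      exact hx0 (funext fun i => h i)
    have hrj0 : 0 < r j0 := by simpa [hr] using norm_pos_iff.mpr hj0
    intro i
    obtain ⟨k, hk1, hk⟩ := hirr i j0
    have h1 : r i = ∑ j, (B ^ k) i j * r j := by
      conv_lhs => rw [← hBkr k]
      simp [Matrix.mulVec, dotProduct]
    rw [h1]
    have : 0 < (B ^ k) i j0 * r j0 := mul_pos hk hrj0
    calc (0:ℝ) < (B ^ k) i j0 * r j0 := this
      _ ≤ ∑ j, (B ^ k) i j * r j :=
        Finset.single_le_sum (fun j _ => mul_nonneg (hpowpos k i j) (hrnn j)) (Finset.mem_univ j0)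
  -- Step D : alignment
  set d : Fin m → ℂ := fun i => x i / (r i : ℂ) with hd
  have hrne : ∀ i, (r i : ℂ) ≠ 0 := fun i => by
    exact_mod_cast Complex.ofReal_ne_zero.2 (ne_of_gt (hrpos i))
  have hxd : ∀ i, x i = d i * (r i : ℂ) := fun i => by
    show x i = x i / (r i : ℂ) * (r i : ℂ)
    rw [div_mul_cancel₀ _ (hrne i)]
  have habsd : ∀ i, ‖d i‖ = 1 := by
    intro i
    show ‖x i / (r i : ℂ)‖ = 1
    rw [norm_div, Complex.norm_real, Real.norm_eq_abs, abs_of_pos (hrpos i)]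
    exact div_self (ne_of_gt (hrpos i))
  have hdne : ∀ i, d i ≠ 0 := by
    intro i h
    have := habsd i
    rw [h] at this
    simp at this
  have halign : ∀ i j, (B i j : ℂ) * d j = lam * d i * (B i j : ℂ) := by
    intro i j
    set c : ℂ := lam * d i with hc
    have hcabs : ‖c‖ = 1 := by
      show ‖lam * d i‖ = 1
      rw [norm_mul, habs, habsd, one_mul]
    have hcne : c ≠ 0 := by
      intro h; rw [h] at hcabs; simp at hcabs
    have hkey : ∑ j, (B i j : ℂ) * x j = c * (r i : ℂ) := by
      rw [← hAentry x i, hx]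
      simp only [Pi.smul_apply, smul_eq_mul]
      rw [hxd i, hc]; ring
    -- sum of nonneg reals equals zero
    have habscx : ∀ j, ‖c⁻¹ * x j‖ = r j := by
      intro j
      rw [norm_mul, norm_inv, hcabs, inv_one, one_mul]
    have hre : ∀ j, (c⁻¹ * x j).re ≤ r j := by
      intro j
      rw [← habscx j]
      exact Complex.re_le_norm _
    have hsum0 : ∑ j, B i j * (r j - (c⁻¹ * x j).re) = 0 := by
      have h2 : ∑ j, (B i j : ℂ) * (c⁻¹ * x j) = (r i : ℂ) := by
        have : ∑ j, (B i j : ℂ) * (c⁻¹ * x j) = c⁻¹ * ∑ j, (B i j : ℂ) * x j := by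
          rw [Finset.mul_sum]; exact Finset.sum_congr rfl fun j _ => by ring
        rw [this, hkey, ← mul_assoc, inv_mul_cancel₀ hcne, one_mul]
      have h3 : ∑ j, B i j * (c⁻¹ * x j).re = r i := by
        have := congr_arg Complex.re h2
        rw [Complex.re_sum, Complex.ofReal_re] at this
        rw [← this]
        exact Finset.sum_congr rfl fun j _ => (Complex.re_ofReal_mul _ _).symm
      have h4 : ∑ j, B i j * r j = r i := heq i
      simp only [mul_sub]
      rw [Finset.sum_sub_distrib, h3, h4, sub_self]
    have hterm : ∀ j ∈ Finset.univ, B i j * (r j - (c⁻¹ * x j).re) = 0 := by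
      rw [← Finset.sum_eq_zero_iff_of_nonneg]
      · exact hsum0
      · intro j _
        exact mul_nonneg (hpos i j) (sub_nonneg.2 (hre j))
    by_cases hB : B i j = 0
    · rw [hB]; simp
    · have ht : (c⁻¹ * x j).re = r j := by
        have := hterm j (Finset.mem_univ j)
        have h5 : r j - (c⁻¹ * x j).re = 0 := by
          rcases mul_eq_zero.1 this with h | h
          · exact absurd h hB
          · exact h
        linarith
      -- re = abs ⇒ purely real nonneg
      have habsj : ‖c⁻¹ * x j‖ = r j := habscx j
      have him : (c⁻¹ * x j).im = 0 := by
        have hsq := Complex.sq_norm (c⁻¹ * x j)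
        rw [habsj, Complex.normSq_apply, ht] at hsq
        nlinarith
      have hcx : c⁻¹ * x j = (r j : ℂ) := by
        apply Complex.ext
        · simpa using ht
        · simpa using him
      have hxj : x j = c * (r j : ℂ) := by
        rw [← hcx, ← mul_assoc, mul_inv_cancel₀ hcne, one_mul]
      have hdj : d j = c := by
        show x j / (r j : ℂ) = c
        rw [hxj, mul_div_cancel_right₀ _ (hrne j)]
      rw [hdj, hc]; ring
  -- Step E : build eigenvector for lam * z
  obtain ⟨y, hy0, hy⟩ := exists_eigvec A z hz
  set w : Fin m → ℂ := fun i => d i * y i with hw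
  have hwne : w ≠ 0 := by
    obtain ⟨i, hi⟩ : ∃ i, y i ≠ 0 := by
      by_contra h; push_neg at h; exact hy0 (funext fun i => h i)
    intro h
    have := congr_fun h i
    simp only [hw, Pi.zero_apply] at this
    exact hi ((mul_eq_zero.1 this).resolve_left (hdne i))
  apply spec_vec A (lam * z) w hwne
  funext i
  rw [hAentry w i]
  have : ∀ j, (B i j : ℂ) * w j = lam * d i * ((B i j : ℂ) * y j) := by
    intro j
    rw [hw]
    calc (B i j : ℂ) * (d j * y j) = ((B i j : ℂ) * d j) * y j := by ring
      _ = (lam * d i * (B i j : ℂ)) * y j := by rw [halign i j]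
      _ = lam * d i * ((B i j : ℂ) * y j) := by ring
  rw [Finset.sum_congr rfl (fun j _ => this j), ← Finset.mul_sum, ← hAentry y i, hy]
  simp only [Pi.smul_apply, smul_eq_mul, hw]
  ring

/-- The peripheral spectrum of a column-stochastic irreducible nonnegative matrix is the
(cyclic) group of `h`-th roots of unity for some `1 ≤ h ≤ m`. -/
theorem peripheral_spectrum_roots_of_unity
    (m : ℕ) (hm : 1 ≤ m) (B : Matrix (Fin m) (Fin m) ℝ)
    (hpos : ∀ i j, 0 ≤ B i j) (hcol : ∀ j, ∑ i, B i j = 1)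
    (hirr : ∀ i j, ∃ k : ℕ, 1 ≤ k ∧ 0 < (B ^ k) i j) :
    ∃ h : ℕ, 1 ≤ h ∧ h ≤ m ∧
      {z : ℂ | z ∈ spectrum ℂ (B.map (Complex.ofReal)) ∧ ‖z‖ = 1} =
        {z : ℂ | z ^ h = 1} := by
  set A := B.map Complex.ofReal with hA
  set S : Set ℂ := {z | z ∈ spectrum ℂ A ∧ ‖z‖ = 1} with hS
  have h1S : (1 : ℂ) ∈ S := ⟨one_mem_spec B hm hcol, by simp⟩
  have hmul : ∀ x ∈ S, ∀ y ∈ S, x * y ∈ S := fun x hx y hy =>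
    ⟨shift_lemma m B hpos hcol hirr x hx.1 hx.2 y hy.1,
      by rw [norm_mul, hx.2, hy.2, one_mul]⟩
  have hSsub : S ⊆ ↑A.charpoly.roots.toFinset := fun z hz => spec_finite A hz.1
  have hSfin : S.Finite := Set.Finite.subset (A.charpoly.roots.toFinset.finite_toSet) hSsub
  have hScard : S.ncard ≤ m := by
    refine le_trans (Set.ncard_le_ncard hSsub (A.charpoly.roots.toFinset.finite_toSet)) ?_
    rw [Set.ncard_coe_finset]
    exact roots_card A
  have hne0 : ∀ z ∈ S, z ≠ 0 := by
    intro z hz h0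
    rw [h0] at hz
    simpa using hz.2
  -- the subgroup of units with value in S
  have hpowS : ∀ u : ℂˣ, (↑u : ℂ) ∈ S → ∀ k : ℕ, ((↑(u ^ k) : ℂ)) ∈ S := by
    intro u hu k
    induction k with
    | zero => simpa using h1S
    | succ n ih =>
      rw [pow_succ, Units.val_mul]
      exact hmul _ ih _ hu
  have hinv : ∀ u : ℂˣ, (↑u : ℂ) ∈ S → ((↑u⁻¹ : ℂ)) ∈ S := by
    intro u hu
    have hnotinj : ¬ Function.Injective (fun k : ℕ => u ^ k) := by
      intro hinj
      have : Set.Infinite (Set.range fun k : ℕ => ((↑(u ^ k) : ℂ))) := by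
        apply Set.infinite_range_of_injective
        intro a b hab
        exact hinj (Units.ext hab)
      exact this (Set.Finite.subset hSfin (by rintro _ ⟨k, rfl⟩; exact hpowS u hu k))
    rw [Function.not_injective_iff] at hnotinj
    obtain ⟨a, b, hab, hne⟩ := hnotinj
    wlog hlt : b < a generalizing a b
    · exact this b a hab.symm (Ne.symm hne) (by omega)
    have hone : u ^ (a - b) = 1 := by
      have : u ^ (a - b) * u ^ b = u ^ b := by
        rw [← pow_add]
        rw [Nat.sub_add_cancel (le_of_lt hlt)]
        exact hab
      exact mul_right_cancel (by rw [this, one_mul])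
    have hinv' : u⁻¹ = u ^ (a - b - 1) := by
      have h1 : 1 ≤ a - b := by omega
      rw [eq_comm, eq_inv_iff_mul_eq_one, ← pow_succ, Nat.sub_add_cancel h1, hone]
    rw [hinv']
    exact hpowS u hu _
  set H : Subgroup ℂˣ :=
    { carrier := {u : ℂˣ | (↑u : ℂ) ∈ S}
      mul_mem' := fun ha hb => hmul _ ha _ hb
      one_mem' := h1S
      inv_mem' := fun ha => hinv _ ha } with hH
  haveI hHfin : Finite H := by
    have : Set.Finite {u : ℂˣ | (↑u : ℂ) ∈ S} :=
      Set.Finite.preimage (Function.Injective.injOn Units.val_injective) hSfin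
    exact this.to_subtype
  -- bijection between H and S
  have hbij : Function.Bijective (fun u : H => (⟨((u : ℂˣ) : ℂ), u.2⟩ : S)) := by
    constructor
    · intro a b hab
      exact Subtype.ext (Units.ext (congr_arg Subtype.val hab))
    · rintro ⟨z, hz⟩
      exact ⟨⟨Units.mk0 z (hne0 z hz), hz⟩, rfl⟩
  have hcardeq : Nat.card H = S.ncard := by
    rw [← Nat.card_coe_set_eq]
    exact Nat.card_eq_of_bijective _ hbij
  refine ⟨Nat.card H, ?_, ?_, ?_⟩
  · have : Nonempty H := ⟨⟨1, h1S⟩⟩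
    exact Nat.one_le_iff_ne_zero.2 (Nat.card_ne_zero.2 ⟨this, hHfin⟩)
  · rw [hcardeq]; exact hScard
  · set h := Nat.card H with hh
    have hpos' : 0 < h := by
      have : Nonempty H := ⟨⟨1, h1S⟩⟩
      exact Nat.card_pos
    have hsub : S ⊆ {z : ℂ | z ^ h = 1} := by
      intro z hz
      have hu : (Units.mk0 z (hne0 z hz) : ℂˣ) ∈ H := hz
      have h1 := pow_card_eq_one' (G := H) (x := ⟨Units.mk0 z (hne0 z hz), hu⟩)
      have h2 : (Units.mk0 z (hne0 z hz)) ^ h = 1 := by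
        have := congr_arg (Subtype.val) h1
        rw [SubmonoidClass.coe_pow] at this
        simpa [hh] using this
      have h4 := congr_arg (Units.val) h2
      rw [Units.val_pow_eq_pow_val] at h4
      simpa using h4
    have hroot := Complex.isPrimitiveRoot_exp h (Nat.pos_iff_ne_zero.1 hpos')
    have hTcard : (Polynomial.nthRootsFinset h (1 : ℂ)).card = h := hroot.card_nthRootsFinset
    have hTset : {z : ℂ | z ^ h = 1} = ↑(Polynomial.nthRootsFinset h (1 : ℂ)) := by
      ext z
      simp [Polynomial.mem_nthRootsFinset hpos']
    apply Set.eq_of_subset_of_ncard_le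
    · exact hsub
    · rw [hTset, Set.ncard_coe_finset, hTcard, ← hcardeq]
    · rw [hTset]; exact (Polynomial.nthRootsFinset h (1 : ℂ)).finite_toSet
end

section
/- Let B be an m×m column-stochastic irreducible matrix with index of imprimitivity h = |σ(B) ∩ Γ|. Then the sequence of matrix powers (B^{hk})_{k ∈ ℕ} converges as k → ∞. -/
open Filter Finset Matrix

noncomputable def Complex.abs : AbsoluteValue ℂ ℝ where
  toFun z := ‖z‖
  map_mul' := norm_mul
  nonneg' := norm_nonneg
  eq_zero' _ := norm_eq_zero
  add_le' := norm_add_le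

lemma Complex.norm_eq_abs (z : ℂ) : ‖z‖ = Complex.abs z := rfl

lemma Complex.abs_conj (z : ℂ) : Complex.abs ((starRingEnd ℂ) z) = Complex.abs z :=
  Complex.norm_conj z

lemma Complex.abs_ofReal (r : ℝ) : Complex.abs (r : ℂ) = |r| :=
  (Complex.norm_real r).trans (Real.norm_eq_abs r)

lemma Complex.abs_natCast (n : ℕ) : Complex.abs (n : ℂ) = n := Complex.norm_natCast n

lemma Complex.sq_abs (z : ℂ) : Complex.abs z ^ 2 = Complex.normSq z := Complex.sq_norm z

lemma Complex.re_le_abs (z : ℂ) : z.re ≤ Complex.abs z := Complex.re_le_norm z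

lemma Complex.normSq_eq_abs (z : ℂ) : Complex.normSq z = Complex.abs z ^ 2 :=
  Complex.normSq_eq_norm_sq z

section Aux

variable {m : ℕ}

lemma eq_ofReal_abs_of_re_eq_abs {w : ℂ} (hw : w.re = Complex.abs w) :
    w = ((Complex.abs w : ℝ) : ℂ) := by
  have h1 : Complex.abs w ^ 2 = w.re * w.re + w.im * w.im := by
    rw [Complex.sq_abs, Complex.normSq_apply]
  rw [← hw] at h1
  have him : w.im * w.im = 0 := by nlinarith [h1]
  have him0 : w.im = 0 := mul_self_eq_zero.mp him
  apply Complex.ext <;> simp [him0, hw]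

/-- Equality case of the triangle inequality for finite sums of complex numbers. -/
lemma align_of_abs_sum_eq (z : Fin m → ℂ)
    (hz : Complex.abs (∑ l, z l) = ∑ l, Complex.abs (z l)) (j : Fin m) :
    ((∑ l, Complex.abs (z l) : ℝ) : ℂ) * z j = (Complex.abs (z j) : ℂ) * ∑ l, z l := by
  set s : ℂ := ∑ l, z l with hs
  by_cases hs0 : s = 0
  · have h0 : ∑ l, Complex.abs (z l) = 0 := by rw [← hz, hs0, map_zero]
    have hzl : ∀ l ∈ Finset.univ, Complex.abs (z l) = 0 :=
      (Finset.sum_eq_zero_iff_of_nonneg (fun l _ => AbsoluteValue.nonneg _ _)).mp h0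
    have hj : z j = 0 := by simpa using hzl j (Finset.mem_univ j)
    simp [hj]
  · have key : ((starRingEnd ℂ) s) * z j = ((Complex.abs s * Complex.abs (z j) : ℝ) : ℂ) := by
      have hterm : ∀ l ∈ Finset.univ,
          0 ≤ Complex.abs s * Complex.abs (z l) - (((starRingEnd ℂ) s) * z l).re := by
        intro l _
        have h1 : (((starRingEnd ℂ) s) * z l).re ≤ Complex.abs (((starRingEnd ℂ) s) * z l) :=
          Complex.re_le_abs _
        have h2 : Complex.abs (((starRingEnd ℂ) s) * z l)
            = Complex.abs s * Complex.abs (z l) := by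
          rw [Complex.abs.map_mul, Complex.abs_conj]
        linarith
      have hsum : ∑ l, (Complex.abs s * Complex.abs (z l) - (((starRingEnd ℂ) s) * z l).re) = 0 := by
        have e1 : ∑ l, (((starRingEnd ℂ) s) * z l).re = ((((starRingEnd ℂ) s) * s)).re := by
          rw [← Complex.re_sum]
          congr 1
          rw [← Finset.mul_sum]
        have e2 : (((starRingEnd ℂ) s) * s).re = Complex.abs s ^ 2 := by
          rw [mul_comm, Complex.mul_conj, Complex.normSq_eq_abs]
          exact Complex.ofReal_re _
        rw [Finset.sum_sub_distrib, ← Finset.mul_sum, ← hz, e1, e2]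
        ring
      have hall := (Finset.sum_eq_zero_iff_of_nonneg hterm).mp hsum
      have hj := hall j (Finset.mem_univ j)
      have habs2 : Complex.abs (((starRingEnd ℂ) s) * z j)
          = Complex.abs s * Complex.abs (z j) := by
        rw [Complex.abs.map_mul, Complex.abs_conj]
      have hre : (((starRingEnd ℂ) s) * z j).re = Complex.abs (((starRingEnd ℂ) s) * z j) := by
        rw [habs2]; linarith
      have heq := eq_ofReal_abs_of_re_eq_abs hre
      rw [heq, habs2]
    have h3 : ((‖s‖ : ℝ) : ℂ) ^ 2 * z j = s * ((Complex.abs s * Complex.abs (z j) : ℝ) : ℂ) := by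
      rw [← Complex.mul_conj', mul_assoc, key]
    have h4 : ‖s‖ = Complex.abs s := rfl
    rw [h4] at h3
    have habs : ((Complex.abs s : ℝ) : ℂ) ≠ 0 :=
      Complex.ofReal_ne_zero.mpr ((AbsoluteValue.ne_zero_iff _).mpr hs0)
    have h6 : ((Complex.abs s : ℝ) : ℂ) * z j = ((Complex.abs (z j) : ℝ) : ℂ) * s := by
      apply mul_left_cancel₀ habs
      calc ((Complex.abs s : ℝ) : ℂ) * (((Complex.abs s : ℝ) : ℂ) * z j)
          = ((Complex.abs s : ℝ) : ℂ) ^ 2 * z j := by ring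
        _ = s * ((Complex.abs s * Complex.abs (z j) : ℝ) : ℂ) := h3
        _ = ((Complex.abs s : ℝ) : ℂ) * (((Complex.abs (z j) : ℝ) : ℂ) * s) := by
            push_cast; ring
    rw [← hz]
    exact h6

end Aux

section Stoch

variable {m : ℕ}

lemma pow_entry_nonneg {B : Matrix (Fin m) (Fin m) ℝ} (hpos : ∀ i j, 0 ≤ B i j) (n : ℕ)
    (hn : 1 ≤ n) : ∀ i j, 0 ≤ (B ^ n) i j := by
  induction n with
  | zero => omega
  | succ n ih =>
    rcases Nat.eq_or_lt_of_le hn with h1 | h1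
    · intro i j; rw [← h1]; simpa using hpos i j
    · intro i j
      rw [pow_succ, Matrix.mul_apply]
      exact Finset.sum_nonneg fun l _ => mul_nonneg (ih (by omega) i l) (hpos l j)

lemma pow_col_sum {B : Matrix (Fin m) (Fin m) ℝ} (hcol : ∀ j, ∑ i, B i j = 1) (n : ℕ)
    (hn : 1 ≤ n) : ∀ j, ∑ i, (B ^ n) i j = 1 := by
  induction n with
  | zero => omega
  | succ n ih =>
    rcases Nat.eq_or_lt_of_le hn with h1 | h1
    · intro j; rw [← h1]; simpa using hcol j
    · intro j
      have ihn := ih (by omega)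
      simp only [pow_succ, Matrix.mul_apply]
      rw [Finset.sum_comm]
      calc ∑ l, ∑ i, (B ^ n) i l * B l j = ∑ l, (∑ i, (B ^ n) i l) * B l j := by
            simp [Finset.sum_mul]
        _ = ∑ l, B l j := by simp [ihn]
        _ = 1 := hcol j

lemma pow_entry_le_one {B : Matrix (Fin m) (Fin m) ℝ} (hpos : ∀ i j, 0 ≤ B i j)
    (hcol : ∀ j, ∑ i, B i j = 1) (n : ℕ) (hn : 1 ≤ n) : ∀ i j, (B ^ n) i j ≤ 1 := by
  intro i j
  have h1 := pow_col_sum hcol n hn j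
  have h2 : (B ^ n) i j ≤ ∑ l, (B ^ n) l j :=
    Finset.single_le_sum (fun l _ => pow_entry_nonneg hpos n hn l j) (Finset.mem_univ i)
  rw [h1] at h2
  exact h2

lemma mulVec_norm_le {C : Matrix (Fin m) (Fin m) ℂ} (hC : ∀ i j, Complex.abs (C i j) ≤ 1)
    (v : Fin m → ℂ) : ‖C.mulVec v‖ ≤ (m : ℝ) * ‖v‖ := by
  have hnn : (0 : ℝ) ≤ (m : ℝ) * ‖v‖ := by positivity
  rw [pi_norm_le_iff_of_nonneg hnn]
  intro i
  calc ‖C.mulVec v i‖ = Complex.abs (∑ j, C i j * v j) := by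
        simp [Matrix.mulVec, dotProduct, Complex.norm_eq_abs]
    _ ≤ ∑ j, Complex.abs (C i j * v j) := by
        exact Complex.abs.sum_le _ _
    _ ≤ ∑ _j : Fin m, ‖v‖ := by
        apply Finset.sum_le_sum
        intro j _
        rw [Complex.abs.map_mul]
        calc Complex.abs (C i j) * Complex.abs (v j) ≤ 1 * ‖v j‖ := by
              apply mul_le_mul (hC i j) (le_of_eq rfl) (AbsoluteValue.nonneg _ _) zero_le_one
          _ ≤ 1 * ‖v‖ := by
              have := norm_le_pi_norm v j
              simpa using this
          _ = ‖v‖ := one_mul _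
    _ = (m : ℝ) * ‖v‖ := by simp [Finset.sum_const, Finset.card_univ]

lemma map_pow_ofReal (B : Matrix (Fin m) (Fin m) ℝ) (n : ℕ) :
    (B.map (Complex.ofReal)) ^ n = (B ^ n).map (Complex.ofReal) := by
  induction n with
  | zero =>
    ext i j
    simp [Matrix.map_apply, Matrix.one_apply, apply_ite]
  | succ n ih =>
    rw [pow_succ, pow_succ, ih]
    ext i j
    simp only [Matrix.mul_apply, Matrix.map_apply]
    push_cast
    rfl

end Stoch

section Binomial

variable {m : ℕ}

lemma sum_mulVec' {ι : Type*} (s : Finset ι) (f : ι → Matrix (Fin m) (Fin m) ℂ)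
    (v : Fin m → ℂ) : (∑ k ∈ s, f k).mulVec v = ∑ k ∈ s, (f k).mulVec v := by
  ext i
  simp only [Matrix.mulVec, dotProduct, Matrix.sum_apply, Finset.sum_apply,
    Finset.sum_mul]
  rw [Finset.sum_comm]

lemma pow_mulVec_formula (A : Matrix (Fin m) (Fin m) ℂ) (μ : ℂ) (w : Fin m → ℂ) (d n : ℕ)
    (hdn : d ≤ n) (hw : ((A - μ • 1) ^ d).mulVec w = 0) :
    (A ^ n).mulVec w
      = ∑ j ∈ Finset.range d,
          ((n.choose j : ℂ) * μ ^ (n - j)) • ((A - μ • 1) ^ j).mulVec w := by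
  set N : Matrix (Fin m) (Fin m) ℂ := A - μ • 1 with hN
  have hA : A = μ • 1 + N := by rw [hN]; abel
  have hcomm : Commute (μ • (1 : Matrix (Fin m) (Fin m) ℂ)) N :=
    Commute.smul_left (Commute.one_left N) μ
  have key2 : A ^ n = ∑ k ∈ Finset.range (n + 1), ((n.choose k : ℂ) * μ ^ k) • N ^ (n - k) := by
    rw [hA, hcomm.add_pow]
    apply Finset.sum_congr rfl
    intro k _
    calc (μ • (1 : Matrix (Fin m) (Fin m) ℂ)) ^ k * N ^ (n - k) * (n.choose k : Matrix (Fin m) (Fin m) ℂ)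
        = (μ ^ k • N ^ (n - k)) * (n.choose k : Matrix (Fin m) (Fin m) ℂ) := by
          rw [smul_pow, one_pow, smul_mul_assoc, one_mul]
      _ = (n.choose k : Matrix (Fin m) (Fin m) ℂ) * (μ ^ k • N ^ (n - k)) :=
          ((Nat.cast_commute (n.choose k) _).eq).symm
      _ = (n.choose k) • (μ ^ k • N ^ (n - k)) := (nsmul_eq_mul _ _).symm
      _ = ((n.choose k : ℂ)) • (μ ^ k • N ^ (n - k)) := (Nat.cast_smul_eq_nsmul ℂ _ _).symm
      _ = ((n.choose k : ℂ) * μ ^ k) • N ^ (n - k) := smul_smul _ _ _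
  have key3 : (A ^ n).mulVec w
      = ∑ k ∈ Finset.range (n + 1), ((n.choose k : ℂ) * μ ^ k) • (N ^ (n - k)).mulVec w := by
    rw [key2]
    rw [sum_mulVec']
    apply Finset.sum_congr rfl
    intro k _
    rw [Matrix.smul_mulVec]
  -- reflect the sum
  have key4 : (A ^ n).mulVec w
      = ∑ j ∈ Finset.range (n + 1), ((n.choose j : ℂ) * μ ^ (n - j)) • (N ^ j).mulVec w := by
    rw [key3, ← Finset.sum_range_reflect]
    apply Finset.sum_congr rfl
    intro j hj
    have hjn : j ≤ n := by
      have := Finset.mem_range.mp hj; omega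
    rw [Nat.add_sub_cancel]
    rw [Nat.sub_sub_self hjn, Nat.choose_symm hjn]
  rw [key4]
  symm
  apply Finset.sum_subset (Finset.range_subset_range.mpr (by omega))
  intro j hj1 hj2
  have hdj : d ≤ j := by
    have := Finset.mem_range.not.mp hj2; omega
  have hNj : (N ^ j).mulVec w = 0 := by
    have : N ^ j = N ^ (j - d) * N ^ d := by
      rw [← pow_add]
      congr 1
      omega
    rw [this, ← Matrix.mulVec_mulVec, hw, Matrix.mulVec_zero]
  rw [hNj, smul_zero]

end Binomial

section Limits

variable {m : ℕ}

lemma tendsto_zero_of_small_eig (A : Matrix (Fin m) (Fin m) ℂ) (μ : ℂ)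
    (hμ : Complex.abs μ < 1) (w : Fin m → ℂ) (d : ℕ)
    (hw : ((A - μ • 1) ^ d).mulVec w = 0) :
    Tendsto (fun n : ℕ => (A ^ n).mulVec w) atTop (nhds 0) := by
  have hsum : Tendsto (fun n : ℕ => ∑ j ∈ Finset.range d,
      ((n.choose j : ℂ) * μ ^ (n - j)) • ((A - μ • 1) ^ j).mulVec w) atTop (nhds 0) := by
    have h0 : (0 : Fin m → ℂ) = ∑ _j ∈ Finset.range d, (0 : Fin m → ℂ) := by simp
    rw [h0]
    apply tendsto_finset_sum
    intro j _
    have hcoef : Tendsto (fun n : ℕ => (n.choose j : ℂ) * μ ^ (n - j)) atTop (nhds 0) := by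
      by_cases hμ0 : μ = 0
      · apply tendsto_const_nhds.congr'
        filter_upwards [eventually_ge_atTop (j + 1)] with n hn
        rw [hμ0, zero_pow (by omega)]
        ring
      · rw [tendsto_zero_iff_norm_tendsto_zero]
        have hbpos : 0 < Complex.abs μ := AbsoluteValue.pos _ hμ0
        have hg : Tendsto (fun n : ℕ => ((n : ℝ) ^ j * Complex.abs μ ^ n) / Complex.abs μ ^ j)
            atTop (nhds 0) := by
          have := tendsto_pow_const_mul_const_pow_of_lt_one j (AbsoluteValue.nonneg _ μ) hμ
          simpa using this.div_const (Complex.abs μ ^ j)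
        apply squeeze_zero' (by filter_upwards with n; positivity) ?_ hg
        filter_upwards [eventually_ge_atTop j] with n hn
        have e1 : ‖(n.choose j : ℂ) * μ ^ (n - j)‖
            = (n.choose j : ℝ) * Complex.abs μ ^ (n - j) := by
          rw [norm_mul, norm_pow]
          simp [Complex.norm_eq_abs, Complex.abs_natCast]
        rw [e1]
        have e2 : Complex.abs μ ^ (n - j) = Complex.abs μ ^ n / Complex.abs μ ^ j :=
          pow_sub₀ _ (ne_of_gt hbpos) hn
        rw [e2, mul_div_assoc]
        have hcj : (n.choose j : ℝ) ≤ (n : ℝ) ^ j := by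
          calc (n.choose j : ℝ) ≤ ((n ^ j : ℕ) : ℝ) := by exact_mod_cast Nat.choose_le_pow n j
            _ = (n : ℝ) ^ j := by push_cast; ring
        gcongr
    have := hcoef.smul_const (((A - μ • 1) ^ j).mulVec w)
    simpa using this
  apply hsum.congr'
  filter_upwards [eventually_ge_atTop d] with n hn
  exact (pow_mulVec_formula A μ w d n hn hw).symm

lemma eig_semisimple (A : Matrix (Fin m) (Fin m) ℂ)
    (hbound : ∀ (n : ℕ) (v : Fin m → ℂ), ‖(A ^ n).mulVec v‖ ≤ (m : ℝ) * ‖v‖)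
    (μ : ℂ) (hμ : Complex.abs μ = 1) :
    ∀ (d : ℕ) (w : Fin m → ℂ), ((A - μ • 1) ^ d).mulVec w = 0 → (A - μ • 1).mulVec w = 0 := by
  intro d
  induction d with
  | zero =>
    intro w hw
    have hw0 : w = 0 := by simpa using hw
    simp [hw0]
  | succ d ih =>
    intro w hw
    set N : Matrix (Fin m) (Fin m) ℂ := A - μ • 1 with hNdef
    have h2 : (N ^ 2).mulVec w = 0 := by
      have hNw : (N ^ d).mulVec (N.mulVec w) = 0 := by
        rw [Matrix.mulVec_mulVec, ← pow_succ]
        exact hw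
      have := ih (N.mulVec w) hNw
      rw [Matrix.mulVec_mulVec, ← pow_two] at this
      exact this
    by_contra hne
    have hpos : 0 < ‖N.mulVec w‖ := norm_pos_iff.mpr hne
    obtain ⟨n, hn⟩ := exists_nat_gt ((((m : ℝ) + 1) * ‖w‖) / ‖N.mulVec w‖)
    set n' : ℕ := max n 2 with hn'def
    have formula := pow_mulVec_formula A μ w 2 n' (le_max_right _ _) h2
    have hf : (A ^ n').mulVec w
        = (μ ^ n') • w + ((n' : ℂ) * μ ^ (n' - 1)) • N.mulVec w := by
      rw [formula]
      rw [Finset.sum_range_succ, Finset.sum_range_succ, Finset.sum_range_zero]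
      simp [Matrix.one_mulVec, pow_one, Nat.choose_one_right]
      rfl
    have habs1 : ‖(μ ^ n') • w‖ = ‖w‖ := by
      rw [norm_smul, norm_pow, Complex.norm_eq_abs, hμ, one_pow, one_mul]
    have habs2 : ‖((n' : ℂ) * μ ^ (n' - 1)) • N.mulVec w‖ = (n' : ℝ) * ‖N.mulVec w‖ := by
      simp [norm_smul, norm_mul, norm_pow, Complex.norm_eq_abs, hμ, Complex.abs_natCast]
    have hub : ‖(A ^ n').mulVec w‖ ≤ (m : ℝ) * ‖w‖ := hbound n' w
    have hlb : (n' : ℝ) * ‖N.mulVec w‖ ≤ ‖(A ^ n').mulVec w‖ + ‖w‖ := by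
      have e : ((n' : ℂ) * μ ^ (n' - 1)) • N.mulVec w
          = (A ^ n').mulVec w - (μ ^ n') • w := by
        rw [hf]; abel
      calc (n' : ℝ) * ‖N.mulVec w‖ = ‖((n' : ℂ) * μ ^ (n' - 1)) • N.mulVec w‖ := habs2.symm
        _ = ‖(A ^ n').mulVec w - (μ ^ n') • w‖ := by rw [e]
        _ ≤ ‖(A ^ n').mulVec w‖ + ‖(μ ^ n') • w‖ := norm_sub_le _ _
        _ = ‖(A ^ n').mulVec w‖ + ‖w‖ := by rw [habs1]
    have hn'ge : (n : ℝ) ≤ (n' : ℝ) := by exact_mod_cast le_max_left n 2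
    have hcontr : (((m : ℝ) + 1) * ‖w‖) < (n' : ℝ) * ‖N.mulVec w‖ := by
      rw [div_lt_iff₀ hpos] at hn
      calc (((m : ℝ) + 1) * ‖w‖) < (n : ℝ) * ‖N.mulVec w‖ := hn
        _ ≤ (n' : ℝ) * ‖N.mulVec w‖ := by
            apply mul_le_mul_of_nonneg_right hn'ge (norm_nonneg _)
    have : (n' : ℝ) * ‖N.mulVec w‖ ≤ ((m : ℝ) + 1) * ‖w‖ := by linarith
    linarith

end Limits

section Spectrum

variable {m : ℕ}

lemma mem_spectrum_iff_det {M : Matrix (Fin m) (Fin m) ℂ} {z : ℂ} :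
    z ∈ spectrum ℂ M ↔ (z • (1 : Matrix (Fin m) (Fin m) ℂ) - M).det = 0 := by
  rw [spectrum.mem_iff, Matrix.isUnit_iff_isUnit_det, isUnit_iff_ne_zero, not_not,
    Algebra.algebraMap_eq_smul_one]

lemma mem_spectrum_iff_eigen {M : Matrix (Fin m) (Fin m) ℂ} {z : ℂ} :
    z ∈ spectrum ℂ M ↔ ∃ v ≠ 0, M.mulVec v = z • v := by
  rw [mem_spectrum_iff_det, ← Matrix.exists_mulVec_eq_zero_iff]
  constructor
  · rintro ⟨v, hv0, hv⟩
    refine ⟨v, hv0, ?_⟩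
    rw [Matrix.sub_mulVec, Matrix.smul_mulVec, Matrix.one_mulVec, sub_eq_zero] at hv
    exact hv.symm
  · rintro ⟨v, hv0, hv⟩
    refine ⟨v, hv0, ?_⟩
    rw [Matrix.sub_mulVec, Matrix.smul_mulVec, Matrix.one_mulVec, sub_eq_zero, hv]

lemma mulVec_map_apply (B : Matrix (Fin m) (Fin m) ℝ) (x : Fin m → ℂ) (i : Fin m) :
    (B.map Complex.ofReal).mulVec x i = ∑ j, (B i j : ℂ) * x j := by
  simp [Matrix.mulVec, dotProduct, Matrix.map_apply]

lemma eig_abs_le_one (B : Matrix (Fin m) (Fin m) ℝ)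
    (hpos : ∀ i j, 0 ≤ B i j) (hcol : ∀ j, ∑ i, B i j = 1)
    (μ : ℂ) (x : Fin m → ℂ) (hx : x ≠ 0)
    (heig : (B.map Complex.ofReal).mulVec x = μ • x) : Complex.abs μ ≤ 1 := by
  set a : Fin m → ℝ := fun i => Complex.abs (x i) with ha
  have hsum_pos : 0 < ∑ i, a i := by
    obtain ⟨i0, hi0⟩ := Function.ne_iff.mp hx
    apply Finset.sum_pos' (fun i _ => AbsoluteValue.nonneg _ _)
    exact ⟨i0, Finset.mem_univ i0, AbsoluteValue.pos _ hi0⟩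
  have hkey : Complex.abs μ * ∑ i, a i ≤ ∑ i, a i := by
    calc Complex.abs μ * ∑ i, a i = ∑ i, Complex.abs (μ * x i) := by
          rw [Finset.mul_sum]
          exact Finset.sum_congr rfl fun i _ => (Complex.abs.map_mul μ (x i)).symm
      _ = ∑ i, Complex.abs ((B.map Complex.ofReal).mulVec x i) := by
          apply Finset.sum_congr rfl
          intro i _
          rw [heig]
          rfl
      _ ≤ ∑ i, ∑ j, B i j * a j := by
          apply Finset.sum_le_sum
          intro i _
          rw [mulVec_map_apply]
          calc Complex.abs (∑ j, (B i j : ℂ) * x j) ≤ ∑ j, Complex.abs ((B i j : ℂ) * x j) :=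
                Complex.abs.sum_le _ _
            _ = ∑ j, B i j * a j := by
                apply Finset.sum_congr rfl
                intro j _
                rw [Complex.abs.map_mul, Complex.abs_ofReal, abs_of_nonneg (hpos i j)]
      _ = ∑ j, (∑ i, B i j) * a j := by
          rw [Finset.sum_comm]
          exact Finset.sum_congr rfl fun j _ => (Finset.sum_mul _ _ _).symm
      _ = ∑ j, a j := by simp [hcol]
  nlinarith [hkey, hsum_pos]

lemma peripheral_root (B : Matrix (Fin m) (Fin m) ℝ)
    (hpos : ∀ i j, 0 ≤ B i j) (hcol : ∀ j, ∑ i, B i j = 1)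
    (hirr : ∀ i j, ∃ k : ℕ, 1 ≤ k ∧ 0 < (B ^ k) i j)
    (h : ℕ)
    (hh : h = Set.ncard {z : ℂ | z ∈ spectrum ℂ (B.map (Complex.ofReal)) ∧
      Complex.abs z = 1})
    (lam : ℂ) (x : Fin m → ℂ) (hx : x ≠ 0)
    (heig : (B.map Complex.ofReal).mulVec x = lam • x) (hlam : Complex.abs lam = 1) :
    lam ^ h = 1 := by
  set A : Matrix (Fin m) (Fin m) ℂ := B.map Complex.ofReal with hA
  set a : Fin m → ℝ := fun i => Complex.abs (x i) with ha
  -- Step 1 : B *ᵥ a = a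
  have hBa : B.mulVec a = a := by
    have hle : ∀ i, a i ≤ B.mulVec a i := by
      intro i
      have e1 : a i = Complex.abs (∑ j, (B i j : ℂ) * x j) := by
        rw [← mulVec_map_apply, heig]
        show a i = Complex.abs (lam * x i)
        rw [Complex.abs.map_mul, hlam, one_mul]
      rw [e1]
      calc Complex.abs (∑ j, (B i j : ℂ) * x j) ≤ ∑ j, Complex.abs ((B i j : ℂ) * x j) :=
            Complex.abs.sum_le _ _
        _ = ∑ j, B i j * a j := by
            apply Finset.sum_congr rfl
            intro j _
            rw [Complex.abs.map_mul, Complex.abs_ofReal, abs_of_nonneg (hpos i j)]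
        _ = B.mulVec a i := by simp [Matrix.mulVec, dotProduct]
    have hsum : ∑ i, (B.mulVec a i - a i) = 0 := by
      have e2 : ∑ i, B.mulVec a i = ∑ i, a i := by
        calc ∑ i, B.mulVec a i = ∑ i, ∑ j, B i j * a j := by
              apply Finset.sum_congr rfl
              intro i _
              simp [Matrix.mulVec, dotProduct]
          _ = ∑ j, (∑ i, B i j) * a j := by
              rw [Finset.sum_comm]
              exact Finset.sum_congr rfl fun j _ => (Finset.sum_mul _ _ _).symm
          _ = ∑ i, a i := by simp [hcol]
      rw [Finset.sum_sub_distrib, e2, sub_self]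
    have hall := (Finset.sum_eq_zero_iff_of_nonneg
      (fun i _ => by linarith [hle i])).mp hsum
    funext i
    have := hall i (Finset.mem_univ i)
    linarith [this]
  -- Step 2 : (B ^ k) *ᵥ a = a for k ≥ 1
  have hBka : ∀ k : ℕ, (B ^ k).mulVec a = a := by
    intro k
    induction k with
    | zero => simp [Matrix.one_mulVec]
    | succ k ih =>
      rw [pow_succ, ← Matrix.mulVec_mulVec, hBa, ih]
  -- Step 3 : a is strictly positive
  have hapos : ∀ j, 0 < a j := by
    obtain ⟨i0, hi0⟩ := Function.ne_iff.mp hx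
    have hai0 : 0 < a i0 := AbsoluteValue.pos _ hi0
    intro j
    obtain ⟨k, hk1, hkpos⟩ := hirr j i0
    have hKa := congrFun (hBka k) j
    have hterm : (B ^ k) j i0 * a i0 ≤ ∑ l, (B ^ k) j l * a l := by
      apply Finset.single_le_sum (f := fun l => (B ^ k) j l * a l)
        (fun l _ => mul_nonneg (pow_entry_nonneg hpos k hk1 j l) (AbsoluteValue.nonneg _ _))
        (Finset.mem_univ i0)
    have e3 : (B ^ k).mulVec a j = ∑ l, (B ^ k) j l * a l := by
      simp [Matrix.mulVec, dotProduct]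
    rw [e3] at hKa
    have : 0 < (B ^ k) j i0 * a i0 := mul_pos hkpos hai0
    linarith
  -- Step 4 : alignment
  have halign : ∀ i j, B i j ≠ 0 → (a i : ℂ) * x j = lam * ((a j : ℂ) * x i) := by
    intro i j hBij
    have hzsum : (∑ l, (B i l : ℂ) * x l) = lam * x i := by
      rw [← mulVec_map_apply, heig]
      rfl
    have habs_eq : Complex.abs (∑ l, (B i l : ℂ) * x l) = ∑ l, Complex.abs ((B i l : ℂ) * x l) := by
      rw [hzsum, Complex.abs.map_mul, hlam, one_mul]
      have : ∑ l, Complex.abs ((B i l : ℂ) * x l) = ∑ l, B i l * a l := by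
        apply Finset.sum_congr rfl
        intro l _
        rw [Complex.abs.map_mul, Complex.abs_ofReal, abs_of_nonneg (hpos i l)]
      rw [this]
      have := congrFun hBa i
      have e4 : B.mulVec a i = ∑ l, B i l * a l := by
        simp [Matrix.mulVec, dotProduct]
      rw [e4] at this
      rw [this]
    have key := align_of_abs_sum_eq (fun l => (B i l : ℂ) * x l) habs_eq j
    have e5 : ∑ l, Complex.abs ((B i l : ℂ) * x l) = a i := by
      have : ∑ l, Complex.abs ((B i l : ℂ) * x l) = ∑ l, B i l * a l := by
        apply Finset.sum_congr rfl
        intro l _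
        rw [Complex.abs.map_mul, Complex.abs_ofReal, abs_of_nonneg (hpos i l)]
      rw [this]
      have := congrFun hBa i
      have e4 : B.mulVec a i = ∑ l, B i l * a l := by
        simp [Matrix.mulVec, dotProduct]
      rw [e4] at this
      rw [this]
    have e6 : Complex.abs ((B i j : ℂ) * x j) = B i j * a j := by
      rw [Complex.abs.map_mul, Complex.abs_ofReal, abs_of_nonneg (hpos i j)]
    rw [e5, e6, hzsum] at key
    -- key : (a i : ℂ) * ((B i j : ℂ) * x j) = ((B i j * a j : ℝ) : ℂ) * (lam * x i)
    have hBijC : (B i j : ℂ) ≠ 0 := Complex.ofReal_ne_zero.mpr hBij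
    apply mul_left_cancel₀ hBijC
    calc (B i j : ℂ) * ((a i : ℂ) * x j) = (a i : ℂ) * ((B i j : ℂ) * x j) := by ring
      _ = ((B i j * a j : ℝ) : ℂ) * (lam * x i) := key
      _ = (B i j : ℂ) * (lam * ((a j : ℂ) * x i)) := by push_cast; ring
  -- Step 5 : determinant identity
  set u : Fin m → ℂ := fun i => x i / (a i : ℂ) with hu
  have hu0 : ∀ i, u i ≠ 0 := by
    intro i
    have hxi : x i ≠ 0 := by
      intro hcon
      have := hapos i
      rw [ha] at this
      simp only [hcon, map_zero] at this
      exact lt_irrefl 0 this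
    exact div_ne_zero hxi (Complex.ofReal_ne_zero.mpr (ne_of_gt (hapos i)))
  have hstep : ∀ i j, u i * (lam * A i j) = A i j * u j := by
    intro i j
    by_cases hBij : B i j = 0
    · have : A i j = 0 := by
        rw [hA]
        simp [Matrix.map_apply, hBij]
      rw [this]; ring
    · have hal := halign i j hBij
      have hAij : A i j = (B i j : ℂ) := by rw [hA]; simp [Matrix.map_apply]
      rw [hAij]
      -- u j = lam * u i
      have huj : u j = lam * u i := by
        rw [hu]
        simp only
        rw [div_eq_iff (Complex.ofReal_ne_zero.mpr (ne_of_gt (hapos j)))]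
        have hai : (a i : ℂ) ≠ 0 := Complex.ofReal_ne_zero.mpr (ne_of_gt (hapos i))
        field_simp
        calc x j * (a i : ℂ) = (a i : ℂ) * x j := by ring
          _ = lam * ((a j : ℂ) * x i) := hal
          _ = lam * x i * (a j : ℂ) := by ring
      rw [huj]
      ring
  have hlam0 : lam ≠ 0 := by
    intro hc
    rw [hc] at hlam
    simp at hlam
  have hmain : lam • (Matrix.diagonal u * A) = A * Matrix.diagonal u := by
    ext i j
    simp only [Matrix.smul_apply, Matrix.diagonal_mul, Matrix.mul_diagonal, smul_eq_mul]
    calc lam * (u i * A i j) = u i * (lam * A i j) := by ring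
      _ = A i j * u j := hstep i j
  have hdet : ∀ z : ℂ, (z • (1 : Matrix (Fin m) (Fin m) ℂ) - lam • A).det
      = (z • (1 : Matrix (Fin m) (Fin m) ℂ) - A).det := by
    intro z
    have hDA : Matrix.diagonal u * (z • (1 : Matrix (Fin m) (Fin m) ℂ) - lam • A)
        = (z • (1 : Matrix (Fin m) (Fin m) ℂ) - A) * Matrix.diagonal u := by
      rw [Matrix.mul_sub, Matrix.sub_mul]
      congr 1
      · rw [Matrix.mul_smul, Matrix.smul_mul, Matrix.mul_one, Matrix.one_mul]
      · rw [Matrix.mul_smul, hmain]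
    have hdD : (Matrix.diagonal u).det ≠ 0 := by
      rw [Matrix.det_diagonal]
      exact Finset.prod_ne_zero_iff.mpr (fun i _ => hu0 i)
    have hd := congrArg Matrix.det hDA
    rw [Matrix.det_mul, Matrix.det_mul] at hd
    apply mul_left_cancel₀ hdD
    rw [hd, mul_comm]
  have hmem_iff : ∀ z : ℂ, z ∈ spectrum ℂ A ↔ z / lam ∈ spectrum ℂ A := by
    intro z
    rw [mem_spectrum_iff_det, mem_spectrum_iff_det, ← hdet z]
    have e : z • (1 : Matrix (Fin m) (Fin m) ℂ) - lam • A
        = lam • ((z / lam) • (1 : Matrix (Fin m) (Fin m) ℂ) - A) := by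
      rw [smul_sub, smul_smul, mul_div_cancel₀ _ hlam0]
    rw [e, Matrix.det_smul, Fintype.card_fin]
    constructor
    · intro hc
      rcases mul_eq_zero.mp hc with h1 | h1
      · exact absurd h1 (pow_ne_zero _ hlam0)
      · exact h1
    · intro hc
      rw [hc, mul_zero]
  have hSfin : Set.Finite {z : ℂ | z ∈ spectrum ℂ A ∧ Complex.abs z = 1} :=
    (Matrix.finite_spectrum A).subset (fun z hz => hz.1)
  set Sf : Finset ℂ := hSfin.toFinset with hSf
  have hmemSf : ∀ z, z ∈ Sf ↔ z ∈ spectrum ℂ A ∧ Complex.abs z = 1 := by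
    intro z
    rw [hSf, Set.Finite.mem_toFinset]
    rfl
  have himg : Sf.image (fun z => lam * z) = Sf := by
    ext y
    rw [Finset.mem_image]
    constructor
    · rintro ⟨w, hw, rfl⟩
      rw [hmemSf] at hw ⊢
      refine ⟨?_, by rw [Complex.abs.map_mul, hlam, one_mul]; exact hw.2⟩
      rw [hmem_iff, mul_div_cancel_left₀ _ hlam0]
      exact hw.1
    · intro hy
      rw [hmemSf] at hy
      refine ⟨y / lam, ?_, ?_⟩
      · rw [hmemSf]
        exact ⟨(hmem_iff y).mp hy.1, by rw [map_div₀, hlam, hy.2, div_one]⟩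
      · field_simp
  have hprod0 : ∏ z ∈ Sf, z ≠ 0 := by
    apply Finset.prod_ne_zero_iff.mpr
    intro z hz
    rw [hmemSf] at hz
    intro hc
    rw [hc] at hz
    simp at hz
  have hcardeq : lam ^ Sf.card * ∏ z ∈ Sf, z = ∏ z ∈ Sf, z := by
    calc lam ^ Sf.card * ∏ z ∈ Sf, z = ∏ z ∈ Sf, (lam * z) := by
          rw [Finset.prod_mul_distrib, Finset.prod_const]
      _ = ∏ y ∈ Sf.image (fun z => lam * z), y := by
          rw [Finset.prod_image (fun p _ q _ hpq => mul_left_cancel₀ hlam0 hpq)]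
      _ = ∏ z ∈ Sf, z := by rw [himg]
  have hfinal : lam ^ Sf.card = 1 := by
    apply mul_right_cancel₀ hprod0
    rw [hcardeq, one_mul]
  have hcard : h = Sf.card := by
    rw [hh, hSf]
    exact Set.ncard_eq_toFinset_card _ hSfin
  rw [hcard]
  exact hfinal

end Spectrum

section Main

variable {m : ℕ}

lemma mulVec_sum_right {ι : Type*} (s : Finset ι) (M : Matrix (Fin m) (Fin m) ℂ)
    (g : ι → Fin m → ℂ) : M.mulVec (∑ i ∈ s, g i) = ∑ i ∈ s, M.mulVec (g i) := by
  simpa only [Matrix.mulVecLin_apply] using map_sum M.mulVecLin g s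

lemma piece_limit (hm : 1 ≤ m) (B : Matrix (Fin m) (Fin m) ℝ)
    (hpos : ∀ i j, 0 ≤ B i j) (hcol : ∀ j, ∑ i, B i j = 1)
    (hirr : ∀ i j, ∃ k : ℕ, 1 ≤ k ∧ 0 < (B ^ k) i j)
    (h : ℕ)
    (hh : h = Set.ncard {z : ℂ | z ∈ spectrum ℂ (B.map (Complex.ofReal)) ∧
      Complex.abs z = 1})
    (hge : 1 ≤ h)
    (μ : ℂ) (w : Fin m → ℂ) (d : ℕ)
    (hw : (((B.map Complex.ofReal) - μ • 1) ^ d).mulVec w = 0) :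
    ∃ y, Tendsto (fun k : ℕ => ((B.map Complex.ofReal) ^ (h * k)).mulVec w) atTop (nhds y) := by
  classical
  set A : Matrix (Fin m) (Fin m) ℂ := B.map Complex.ofReal with hAdef
  by_cases hw0 : w = 0
  · exact ⟨0, by simp [hw0, Matrix.mulVec_zero, tendsto_const_nhds]⟩
  have hP : ∃ k, ((A - μ • 1) ^ k).mulVec w = 0 := ⟨d, hw⟩
  set j := Nat.find hP with hjdef
  have hj : ((A - μ • 1) ^ j).mulVec w = 0 := Nat.find_spec hP
  have hj0 : j ≠ 0 := by
    intro hc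
    rw [hc, pow_zero, Matrix.one_mulVec] at hj
    exact hw0 hj
  set x : Fin m → ℂ := ((A - μ • 1) ^ (j - 1)).mulVec w with hxdef
  have hxne : x ≠ 0 := Nat.find_min hP (by omega : j - 1 < j)
  have hNx : (A - μ • 1).mulVec x = 0 := by
    have hj1 : j - 1 + 1 = j := by omega
    rw [hxdef, Matrix.mulVec_mulVec, ← pow_succ', hj1]
    exact hj
  have heig : A.mulVec x = μ • x := by
    have e : A = (A - μ • 1) + μ • 1 := by abel
    calc A.mulVec x = ((A - μ • 1) + μ • 1).mulVec x := by rw [← e]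
      _ = (A - μ • 1).mulVec x + (μ • (1 : Matrix (Fin m) (Fin m) ℂ)).mulVec x :=
          Matrix.add_mulVec _ _ _
      _ = μ • x := by
          rw [hNx, Matrix.smul_mulVec, Matrix.one_mulVec, zero_add]
  have habs := eig_abs_le_one B hpos hcol μ x hxne heig
  rcases lt_or_eq_of_le habs with hlt | heq1
  · refine ⟨0, ?_⟩
    have hmain := tendsto_zero_of_small_eig A μ hlt w d hw
    have hcomp : Tendsto (fun k : ℕ => h * k) atTop atTop := by
      apply tendsto_atTop_mono (f := fun k : ℕ => k)
      · intro k
        exact Nat.le_mul_of_pos_left k hge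
      · exact tendsto_id
    exact hmain.comp hcomp
  · have hμh : μ ^ h = 1 := peripheral_root B hpos hcol hirr h hh μ x hxne heig heq1
    have hbound : ∀ (n : ℕ) (v : Fin m → ℂ), ‖(A ^ n).mulVec v‖ ≤ (m : ℝ) * ‖v‖ := by
      intro n v
      rcases Nat.eq_zero_or_pos n with hn0 | hn1
      · rw [hn0, pow_zero, Matrix.one_mulVec]
        calc ‖v‖ ≤ 1 * ‖v‖ := by rw [one_mul]
          _ ≤ (m : ℝ) * ‖v‖ := by
            apply mul_le_mul_of_nonneg_right _ (norm_nonneg _)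
            exact_mod_cast hm
      · apply mulVec_norm_le
        intro i jj
        rw [map_pow_ofReal]
        rw [Matrix.map_apply, Complex.abs_ofReal, abs_of_nonneg (pow_entry_nonneg hpos n hn1 i jj)]
        exact pow_entry_le_one hpos hcol n hn1 i jj
    have hsemis : (A - μ • 1).mulVec w = 0 := eig_semisimple A hbound μ heq1 d w hw
    have hAw : A.mulVec w = μ • w := by
      rw [Matrix.sub_mulVec, Matrix.smul_mulVec, Matrix.one_mulVec, sub_eq_zero] at hsemis
      exact hsemis
    have hpow : ∀ n : ℕ, (A ^ n).mulVec w = (μ ^ n) • w := by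
      intro n
      induction n with
      | zero => simp [Matrix.one_mulVec]
      | succ n ih =>
        rw [pow_succ', ← Matrix.mulVec_mulVec, ih, Matrix.mulVec_smul, hAw, smul_smul, ← pow_succ]
    refine ⟨w, ?_⟩
    have hconst : (fun k : ℕ => (A ^ (h * k)).mulVec w) = fun _ => w := by
      funext k
      rw [hpow, pow_mul, hμh, one_pow, one_smul]
    rw [hconst]
    exact tendsto_const_nhds

end Main

/-- For a column-stochastic irreducible matrix `B` with index of imprimitivity
`h = |σ(B) ∩ Γ|`, the powers `B^{hk}` converge as `k → ∞`. -/
theorem stochastic_irreducible_powers_converge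
    (m : ℕ) (hm : 1 ≤ m) (B : Matrix (Fin m) (Fin m) ℝ)
    (hpos : ∀ i j, 0 ≤ B i j) (hcol : ∀ j, ∑ i, B i j = 1)
    (hirr : ∀ i j, ∃ k : ℕ, 1 ≤ k ∧ 0 < (B ^ k) i j)
    (h : ℕ)
    (hh : h = Set.ncard {z : ℂ | z ∈ spectrum ℂ (B.map (Complex.ofReal)) ∧
      ‖z‖ = 1}) :
    ∃ L : Matrix (Fin m) (Fin m) ℝ,
      Filter.Tendsto (fun k : ℕ => B ^ (h * k)) Filter.atTop (nhds L) := by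
  classical
  rcases Nat.eq_zero_or_pos h with h0 | hge
  · refine ⟨1, ?_⟩
    have hconst : (fun k : ℕ => B ^ (h * k)) = fun _ => (1 : Matrix (Fin m) (Fin m) ℝ) := by
      funext k
      rw [h0, zero_mul, pow_zero]
    rw [hconst]
    exact tendsto_const_nhds
  · set A : Matrix (Fin m) (Fin m) ℂ := B.map Complex.ofReal with hAdef
    -- convergence of `A^{hk} v` for every vector `v`
    have hvec : ∀ v : Fin m → ℂ,
        ∃ y, Tendsto (fun k : ℕ => (A ^ (h * k)).mulVec v) atTop (nhds y) := by
      intro v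
      set f : Module.End ℂ (Fin m → ℂ) := Matrix.toLinAlgEquiv' A with hfdef
      have htop := Module.End.iSup_maxGenEigenspace_eq_top f
      have hv : v ∈ ⨆ μ : ℂ, f.maxGenEigenspace μ := by
        rw [htop]
        exact Submodule.mem_top
      rw [Submodule.mem_iSup_iff_exists_finsupp] at hv
      obtain ⟨c, hc, hsum⟩ := hv
      have hpiece : ∀ μ : ℂ,
          ∃ y, Tendsto (fun k : ℕ => (A ^ (h * k)).mulVec (c μ)) atTop (nhds y) := by
        intro μ
        have hmem := hc μ
        rw [Module.End.mem_maxGenEigenspace] at hmem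
        obtain ⟨d, hd⟩ := hmem
        have htransfer : (f - μ • (1 : Module.End ℂ (Fin m → ℂ))) ^ d
            = Matrix.toLinAlgEquiv' ((A - μ • 1) ^ d) := by
          rw [map_pow, map_sub]
          congr 2
          rw [← Algebra.algebraMap_eq_smul_one, ← Algebra.algebraMap_eq_smul_one]
          exact (AlgEquiv.commutes _ μ).symm
        have hmat : ((A - μ • 1) ^ d).mulVec (c μ) = 0 := by
          have := hd
          rw [htransfer] at this
          rwa [Matrix.toLinAlgEquiv'_apply] at this
        exact piece_limit hm B hpos hcol hirr h hh hge μ (c μ) d hmat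
      choose y hy using hpiece
      refine ⟨∑ μ ∈ c.support, y μ, ?_⟩
      have hre : (fun k : ℕ => (A ^ (h * k)).mulVec v)
          = fun k : ℕ => ∑ μ ∈ c.support, (A ^ (h * k)).mulVec (c μ) := by
        funext k
        conv_lhs => rw [← hsum]
        rw [Finsupp.sum]
        exact mulVec_sum_right _ _ _
      rw [hre]
      exact tendsto_finset_sum _ (fun μ _ => hy μ)
    -- entrywise convergence of the real matrices
    have hent : ∀ i j : Fin m, ∃ c : ℝ,
        Tendsto (fun k : ℕ => (B ^ (h * k)) i j) atTop (nhds c) := by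
      intro i j
      obtain ⟨y, hy⟩ := hvec (Pi.single j 1)
      refine ⟨(y i).re, ?_⟩
      have hcoord : Tendsto (fun k : ℕ => (A ^ (h * k)).mulVec (Pi.single j 1) i)
          atTop (nhds (y i)) := by
        have hconti : Continuous fun (g : Fin m → ℂ) => g i := continuous_apply i
        exact (hconti.tendsto _).comp hy
      have hentry : ∀ k : ℕ, (A ^ (h * k)).mulVec (Pi.single j 1) i
          = (((B ^ (h * k)) i j : ℝ) : ℂ) := by
        intro k
        rw [hAdef, map_pow_ofReal]
        rw [mulVec_map_apply]
        rw [Finset.sum_eq_single j]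
        · simp
        · intro b _ hb
          simp [Pi.single_apply, hb]
        · intro hj
          exact absurd (Finset.mem_univ j) hj
      have hcoord2 : Tendsto (fun k : ℕ => (((B ^ (h * k)) i j : ℝ) : ℂ))
          atTop (nhds (y i)) := by
        apply hcoord.congr
        intro k
        exact hentry k
      have := (Complex.continuous_re.tendsto _).comp hcoord2
      simpa [Function.comp_def] using this
    choose Lf hLf using hent
    refine ⟨Matrix.of Lf, ?_⟩
    have : Tendsto (fun k : ℕ => (fun i j => (B ^ (h * k)) i j : Fin m → Fin m → ℝ)) atTop (nhds Lf) := by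
      rw [tendsto_pi_nhds]
      intro i
      rw [tendsto_pi_nhds]
      intro j
      exact hLf i j
    exact this
end
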